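/- If θ satisfies arccos(1/√3) < θ < π/2, then for every unit vector u ∈ ℝ³, the sum over i = 1,2,3 of b(arccos(|u·eᵢ|)/θ) is strictly positive, where b is the standard bump function. -/
import Mathlib


noncomputable def bump (r : ℝ) : ℝ :=
  if |r| < 1 then Real.exp (r ^ 2 / (r ^ 2 - 1)) else 0

lemma bump_nonneg (r : ℝ) : 0 ≤ bump r := by
  unfold bump; split
  · exact (Real.exp_pos _).le
  · exact le_rfl

lemma bump_pos {r : ℝ} (h : |r| < 1) : 0 < bump r := by
  unfold bump; rw [if_pos h]; exact Real.exp_pos _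

theorem bump_sum_pos (θ : ℝ) (hθ₁ : Real.arccos (1 / Real.sqrt 3) < θ)
    (hθ₂ : θ < Real.pi / 2) (u : EuclideanSpace ℝ (Fin 3)) (hu : ‖u‖ = 1) :
    0 < ∑ i : Fin 3, bump (Real.arccos |u i| / θ) := by
  have hθpos : 0 < θ := lt_of_le_of_lt (Real.arccos_nonneg _) hθ₁
  -- there exists i with 1/√3 ≤ |u i|
  have hsum : ∑ i : Fin 3, (u i) ^ 2 = 1 := by
    have := EuclideanSpace.norm_eq u
    rw [hu] at this
    have h2 : Real.sqrt (∑ i : Fin 3, ‖u i‖ ^ 2) = 1 := this.symm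
    have h3 : ∑ i : Fin 3, ‖u i‖ ^ 2 = 1 := by
      have hnn : 0 ≤ ∑ i : Fin 3, ‖u i‖ ^ 2 :=
        Finset.sum_nonneg fun i _ => sq_nonneg _
      nlinarith [Real.sq_sqrt hnn, h2]
    simpa [Real.norm_eq_abs, sq_abs] using h3
  have hex : ∃ i : Fin 3, 1 / Real.sqrt 3 ≤ |u i| := by
    by_contra h
    push_neg at h
    have hlt : ∀ i : Fin 3, (u i) ^ 2 < 1 / 3 := by
      intro i
      have hi := h i
      have h3 : (1 / Real.sqrt 3 : ℝ) ^ 2 = 1 / 3 := by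
        rw [div_pow, one_pow, Real.sq_sqrt (by norm_num : (0:ℝ) ≤ 3)]
      have : (u i) ^ 2 < (1 / Real.sqrt 3) ^ 2 := by
        rw [← sq_abs]
        exact pow_lt_pow_left₀ hi (abs_nonneg _) (by norm_num)
      linarith [h3 ▸ this]
    have : ∑ i : Fin 3, (u i) ^ 2 < ∑ _i : Fin 3, (1/3 : ℝ) :=
      Finset.sum_lt_sum_of_nonempty (by simp) fun i _ => hlt i
    simp at this
    linarith [hsum ▸ this]
  obtain ⟨i, hi⟩ := hex
  apply Finset.sum_pos' (fun j _ => bump_nonneg _) ⟨i, Finset.mem_univ i, ?_⟩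
  apply bump_pos
  rw [abs_of_nonneg (div_nonneg (Real.arccos_nonneg _) hθpos.le)]
  rw [div_lt_one hθpos]
  calc Real.arccos |u i| ≤ Real.arccos (1 / Real.sqrt 3) := by
        rw [Real.arccos_eq_pi_div_two_sub_arcsin, Real.arccos_eq_pi_div_two_sub_arcsin]
        have := Real.monotone_arcsin hi
        linarith
    _ < θ := hθ₁
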